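/- Let A ∈ ℝ^{m×n}, C ∈ ℝ^{p×n} and G = AᵀA + CᵀC. If x is a minimizer of ‖Ax − b‖₂ over the set S = {x : ‖Cx − d‖₂ is minimal}, then for any z in the null space of G, x + z is also such a minimizer, and the orthogonal projection of x onto the range of G is also such a minimizer. -/

import Mathlib

open Matrix
open scoped RealInnerProductSpace

private lemma toEuclideanLin_mul_apply {q r s : ℕ} (M : Matrix (Fin q) (Fin r) ℝ)
    (N : Matrix (Fin r) (Fin s) ℝ) (w : EuclideanSpace ℝ (Fin s)) :
    Matrix.toEuclideanLin (M * N) w = Matrix.toEuclideanLin M (Matrix.toEuclideanLin N w) := by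
  simp [Matrix.toEuclideanLin_apply, Matrix.mulVec_mulVec]

private lemma inner_G_self {m n p : ℕ} (A : Matrix (Fin m) (Fin n) ℝ)
    (C : Matrix (Fin p) (Fin n) ℝ) (v : EuclideanSpace ℝ (Fin n))
    (h : (inner ℝ v (Matrix.toEuclideanLin (Aᵀ * A + Cᵀ * C) v) : ℝ) = 0) :
    Matrix.toEuclideanLin A v = 0 ∧ Matrix.toEuclideanLin C v = 0 := by
  have hA : Aᵀ = Aᴴ := (Matrix.conjTranspose_eq_transpose_of_trivial A).symm
  have hC : Cᵀ = Cᴴ := (Matrix.conjTranspose_eq_transpose_of_trivial C).symm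
  have key : (inner ℝ v (Matrix.toEuclideanLin (Aᵀ * A + Cᵀ * C) v) : ℝ) =
      ‖Matrix.toEuclideanLin A v‖ ^ 2 + ‖Matrix.toEuclideanLin C v‖ ^ 2 := by
    rw [map_add, LinearMap.add_apply, inner_add_right,
      toEuclideanLin_mul_apply, toEuclideanLin_mul_apply, hA, hC,
      Matrix.toEuclideanLin_conjTranspose_eq_adjoint,
      Matrix.toEuclideanLin_conjTranspose_eq_adjoint,
      LinearMap.adjoint_inner_right, LinearMap.adjoint_inner_right,
      real_inner_self_eq_norm_sq, real_inner_self_eq_norm_sq]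
  rw [h] at key
  have hA0 : ‖Matrix.toEuclideanLin A v‖ = 0 := by
    nlinarith [sq_nonneg ‖Matrix.toEuclideanLin A v‖, sq_nonneg ‖Matrix.toEuclideanLin C v‖,
      norm_nonneg (Matrix.toEuclideanLin A v), norm_nonneg (Matrix.toEuclideanLin C v)]
  have hC0 : ‖Matrix.toEuclideanLin C v‖ = 0 := by
    nlinarith [sq_nonneg ‖Matrix.toEuclideanLin A v‖, sq_nonneg ‖Matrix.toEuclideanLin C v‖,
      norm_nonneg (Matrix.toEuclideanLin A v), norm_nonneg (Matrix.toEuclideanLin C v)]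
  exact ⟨norm_eq_zero.mp hA0, norm_eq_zero.mp hC0⟩

/-- If `x` solves the LSE problem `min ‖Ax−b‖₂ s.t. x ∈ S`, `S` the set of minimizers of
`‖Cx−d‖₂`, then `x + z` also solves it for any `z ∈ N(G)`, `G = AᵀA + CᵀC`, and the
orthogonal projection of `x` onto `R(G)` also solves it. -/
theorem lse_solution_structure (m n p : ℕ) (A : Matrix (Fin m) (Fin n) ℝ)
    (C : Matrix (Fin p) (Fin n) ℝ) (b : EuclideanSpace ℝ (Fin m)) (d : EuclideanSpace ℝ (Fin p))
    (S : Set (EuclideanSpace ℝ (Fin n)))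
    (hS : S = {x | ∀ y, ‖Matrix.toEuclideanLin C x - d‖ ≤ ‖Matrix.toEuclideanLin C y - d‖})
    (x : EuclideanSpace ℝ (Fin n))
    (hxS : x ∈ S)
    (hxmin : ∀ y ∈ S, ‖Matrix.toEuclideanLin A x - b‖ ≤ ‖Matrix.toEuclideanLin A y - b‖) :
    (∀ z ∈ LinearMap.ker (Matrix.toEuclideanLin (Aᵀ * A + Cᵀ * C)),
        x + z ∈ S ∧
        ∀ y ∈ S, ‖Matrix.toEuclideanLin A (x + z) - b‖ ≤ ‖Matrix.toEuclideanLin A y - b‖) ∧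
    ((↑(Submodule.orthogonalProjectionOnto
          (LinearMap.range (Matrix.toEuclideanLin (Aᵀ * A + Cᵀ * C))) x) :
        EuclideanSpace ℝ (Fin n)) ∈ S ∧
      ∀ y ∈ S,
        ‖Matrix.toEuclideanLin A
            (↑(Submodule.orthogonalProjectionOnto
                (LinearMap.range (Matrix.toEuclideanLin (Aᵀ * A + Cᵀ * C))) x)) - b‖ ≤
          ‖Matrix.toEuclideanLin A y - b‖) := by
  constructor
  · intro z hz
    have hz0 : Matrix.toEuclideanLin (Aᵀ * A + Cᵀ * C) z = 0 := hz
    have hzero := inner_G_self A C z (by rw [hz0, inner_zero_right])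
    have hCxz : Matrix.toEuclideanLin C (x + z) = Matrix.toEuclideanLin C x := by
      rw [map_add, hzero.2, add_zero]
    have hAxz : Matrix.toEuclideanLin A (x + z) = Matrix.toEuclideanLin A x := by
      rw [map_add, hzero.1, add_zero]
    refine ⟨?_, ?_⟩
    · rw [hS]; rw [hS] at hxS
      intro y; rw [hCxz]; exact hxS y
    · intro y hy; rw [hAxz]; exact hxmin y hy
  · set K := LinearMap.range (Matrix.toEuclideanLin (Aᵀ * A + Cᵀ * C)) with hK
    set w : EuclideanSpace ℝ (Fin n) := ↑(Submodule.orthogonalProjectionOnto K x) with hw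
    have hv : x - w ∈ Kᗮ := Submodule.sub_starProjection_mem_orthogonal (K := K) x
    have hmem : Matrix.toEuclideanLin (Aᵀ * A + Cᵀ * C) (x - w) ∈ K :=
      LinearMap.mem_range_self _ _
    have h0 : (inner ℝ (Matrix.toEuclideanLin (Aᵀ * A + Cᵀ * C) (x - w)) (x - w) : ℝ) = 0 :=
      (Submodule.mem_orthogonal K (x - w)).mp hv _ hmem
    have hzero := inner_G_self A C (x - w) (by rw [real_inner_comm]; exact h0)
    have hCw : Matrix.toEuclideanLin C w = Matrix.toEuclideanLin C x := by
      have := hzero.2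
      rw [map_sub, sub_eq_zero] at this
      exact this.symm
    have hAw : Matrix.toEuclideanLin A w = Matrix.toEuclideanLin A x := by
      have := hzero.1
      rw [map_sub, sub_eq_zero] at this
      exact this.symm
    refine ⟨?_, ?_⟩
    · rw [hS]; rw [hS] at hxS
      intro y; rw [hCw]; exact hxS y
    · intro y hy; rw [hAw]; exact hxmin y hy
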